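/- Let X₁, X₂, X₃, Y_R, Y_S be random variables with values in finite sets such that the conditional law factorizes as p(y_R, y_S | x₁, x₂, x₃) = p(y_R | x₃) · p(y_S | x₁, x₂) (i.e., Y_R is conditionally independent of (X₁, X₂, Y_S) given X₃, and Y_S is conditionally independent of (X₃, Y_R) given (X₁, X₂)). Then I(X₁, X₂, X₃; Y_R, Y_S) ≤ I(X₃; Y_R) + I(X₁, X₂; Y_S). -/

import Mathlib

open scoped BigOperators

open Classical in
/-- Probability of an event under a weight function on a finite sample space. -/
noncomputable def pr {Ω : Type} [Fintype Ω] (p : Ω → ℝ) (E : Ω → Prop) : ℝ :=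
  ∑ ω, if E ω then p ω else 0

/-- Shannon entropy (natural log) of a random variable on a finite space. -/
noncomputable def ent {Ω A : Type} [Fintype Ω] [Fintype A] (p : Ω → ℝ) (X : Ω → A) : ℝ :=
  -∑ a : A, pr p (fun ω => X ω = a) * Real.log (pr p (fun ω => X ω = a))

/-- Conditional entropy H(X | Y). -/
noncomputable def condEnt {Ω A B : Type} [Fintype Ω] [Fintype A] [Fintype B]
    (p : Ω → ℝ) (X : Ω → A) (Y : Ω → B) : ℝ :=
  ent p (fun ω => (X ω, Y ω)) - ent p Y

/-- Mutual information I(X ; Y). -/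
noncomputable def mi {Ω A B : Type} [Fintype Ω] [Fintype A] [Fintype B]
    (p : Ω → ℝ) (X : Ω → A) (Y : Ω → B) : ℝ :=
  ent p X + ent p Y - ent p (fun ω => (X ω, Y ω))

/-- Conditional mutual information I(X ; Y | Z). -/
noncomputable def condMI {Ω A B C : Type} [Fintype Ω] [Fintype A] [Fintype B] [Fintype C]
    (p : Ω → ℝ) (X : Ω → A) (Y : Ω → B) (Z : Ω → C) : ℝ :=
  condEnt p X Z + condEnt p Y Z - condEnt p (fun ω => (X ω, Y ω)) Z

/-- `CondIndep p X Y Z` : the Markov chain X — Y — Z holds, i.e. X and Z are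
conditionally independent given Y. -/
def CondIndep {Ω A B C : Type} [Fintype Ω] (p : Ω → ℝ)
    (X : Ω → A) (Y : Ω → B) (Z : Ω → C) : Prop :=
  ∀ (a : A) (b : B) (c : C),
    pr p (fun ω => X ω = a ∧ Y ω = b ∧ Z ω = c) * pr p (fun ω => Y ω = b) =
    pr p (fun ω => X ω = a ∧ Y ω = b) * pr p (fun ω => Y ω = b ∧ Z ω = c)

section aux
variable {Ω : Type} [Fintype Ω]

lemma pr_nonneg (p : Ω → ℝ) (hp : ∀ ω, 0 ≤ p ω) (E : Ω → Prop) : 0 ≤ pr p E := by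
  unfold pr
  refine Finset.sum_nonneg fun ω _ => ?_
  split
  · exact hp ω
  · exact le_refl 0

lemma pr_congr (p : Ω → ℝ) {E F : Ω → Prop} (h : ∀ ω, E ω ↔ F ω) : pr p E = pr p F := by
  unfold pr
  exact Finset.sum_congr rfl fun ω _ => by classical exact if_congr (h ω) rfl rfl

lemma pr_split {B : Type} [Fintype B] (p : Ω → ℝ) (E : Ω → Prop) (Y : Ω → B) :
    pr p E = ∑ b, pr p fun ω => E ω ∧ Y ω = b := by
  classical
  unfold pr
  rw [Finset.sum_comm]
  refine Finset.sum_congr rfl fun ω _ => ?_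
  by_cases hE : E ω <;> simp [hE, Finset.sum_ite_eq']

lemma ent_comp (p : Ω → ℝ) {A B : Type} [Fintype A] [Fintype B] (X : Ω → A)
    (f : A → B) (hf : Function.Injective f) :
    ent p (fun ω => f (X ω)) = ent p X := by
  classical
  unfold ent
  congr 1
  calc ∑ b, pr p (fun ω => f (X ω) = b) * Real.log (pr p fun ω => f (X ω) = b)
      = ∑ b ∈ Finset.univ.image f,
          pr p (fun ω => f (X ω) = b) * Real.log (pr p fun ω => f (X ω) = b) := by
        refine (Finset.sum_subset (Finset.subset_univ _) fun b _ hb => ?_).symm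
        have h0 : pr p (fun ω => f (X ω) = b) = 0 := by
          unfold pr
          refine Finset.sum_eq_zero fun ω _ => ?_
          rw [if_neg]
          intro h
          exact hb (Finset.mem_image.mpr ⟨X ω, Finset.mem_univ _, h⟩)
        rw [h0, zero_mul]
    _ = ∑ a, pr p (fun ω => f (X ω) = f a) * Real.log (pr p fun ω => f (X ω) = f a) :=
        Finset.sum_image fun x _ y _ h => hf h
    _ = ∑ a, pr p (fun ω => X ω = a) * Real.log (pr p fun ω => X ω = a) := by
        refine Finset.sum_congr rfl fun a _ => ?_
        rw [pr_congr p (fun ω => hf.eq_iff)]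

end aux
section aux2
variable {A B C : Type} [Fintype A] [Fintype B] [Fintype C]

lemma sum_rot (F : A → B → C → ℝ) :
    ∑ a, ∑ b, ∑ c, F a b c = ∑ c, ∑ a, ∑ b, F a b c := by
  calc ∑ a, ∑ b, ∑ c, F a b c
      = ∑ a, ∑ c, ∑ b, F a b c := Finset.sum_congr rfl fun a _ => Finset.sum_comm
    _ = ∑ c, ∑ a, ∑ b, F a b c := Finset.sum_comm

lemma sum_rot' (F : A → B → C → ℝ) :
    ∑ a, ∑ b, ∑ c, F a b c = ∑ b, ∑ c, ∑ a, F a b c := by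
  calc ∑ a, ∑ b, ∑ c, F a b c
      = ∑ b, ∑ a, ∑ c, F a b c := Finset.sum_comm
    _ = ∑ b, ∑ c, ∑ a, F a b c := Finset.sum_congr rfl fun b _ => Finset.sum_comm

lemma pointwise_le {x v w u : ℝ} (hx : 0 ≤ x) (hv : x ≤ v) (hw : x ≤ w) (hu : x ≤ u)
    (hv0 : 0 ≤ v) (hw0 : 0 ≤ w) (hu0 : 0 ≤ u) :
    x * Real.log v + x * Real.log w - x * Real.log u - x * Real.log x ≤ v * w / u - x := by
  rcases eq_or_lt_of_le hx with h0 | h0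
  · rw [← h0]
    simp
    positivity
  · have hvp : 0 < v := lt_of_lt_of_le h0 hv
    have hwp : 0 < w := lt_of_lt_of_le h0 hw
    have hup : 0 < u := lt_of_lt_of_le h0 hu
    have ht : (0:ℝ) < v * w / u / x := by positivity
    have hlog := Real.log_le_sub_one_of_pos ht
    have hlogt : Real.log (v * w / u / x)
        = Real.log v + Real.log w - Real.log u - Real.log x := by
      rw [Real.log_div (by positivity) (ne_of_gt h0),
          Real.log_div (by positivity) (ne_of_gt hup),
          Real.log_mul (ne_of_gt hvp) (ne_of_gt hwp)]
    have h1 : x * Real.log (v * w / u / x) ≤ x * (v * w / u / x - 1) :=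
      mul_le_mul_of_nonneg_left hlog hx
    rw [hlogt] at h1
    have h2 : x * (v * w / u / x - 1) = v * w / u - x := by
      field_simp
    rw [h2] at h1
    linarith [h1]

lemma pointwise_eq {x v w u : ℝ} (hx : 0 ≤ x) (hv : x ≤ v) (hw : x ≤ w) (hu : x ≤ u)
    (hfac : x * u = v * w) :
    x * Real.log v + x * Real.log w - x * Real.log u - x * Real.log x = 0 := by
  rcases eq_or_lt_of_le hx with h0 | h0
  · rw [← h0]; ring
  · have hvp : 0 < v := lt_of_lt_of_le h0 hv
    have hwp : 0 < w := lt_of_lt_of_le h0 hw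
    have hup : 0 < u := lt_of_lt_of_le h0 hu
    have hx' : x = v * w / u := by
      field_simp
      ring
      linarith [hfac]
    have hl : Real.log x = Real.log v + Real.log w - Real.log u := by
      rw [hx', Real.log_div (by positivity) (ne_of_gt hup),
          Real.log_mul (ne_of_gt hvp) (ne_of_gt hwp)]
    rw [hl]; ring

lemma SI (j : A → B → C → ℝ) (hj : ∀ a b c, 0 ≤ j a b c) :
    ∑ a, ∑ b, ∑ c, (∑ b', j a b' c) * (∑ a', j a' b c) / (∑ a', ∑ b', j a' b' c)
      = ∑ a, ∑ b, ∑ c, j a b c := by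
  rw [sum_rot, sum_rot (fun a b c => j a b c)]
  refine Finset.sum_congr rfl fun c _ => ?_
  by_cases hu : (∑ a', ∑ b', j a' b' c) = 0
  · have hz : ∀ a b, j a b c = 0 := by
      intro a b
      have h1 := (Finset.sum_eq_zero_iff_of_nonneg
        (fun a _ => Finset.sum_nonneg fun b _ => hj a b c)).mp hu a (Finset.mem_univ a)
      exact (Finset.sum_eq_zero_iff_of_nonneg (fun b _ => hj a b c)).mp h1 b (Finset.mem_univ b)
    simp [hz]
  · have hbw : (∑ b, ∑ a', j a' b c) = ∑ a', ∑ b', j a' b' c := Finset.sum_comm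
    refine Finset.sum_congr rfl fun a _ => ?_
    calc ∑ b, (∑ b', j a b' c) * (∑ a', j a' b c) / (∑ a', ∑ b', j a' b' c)
        = (∑ b', j a b' c) * (∑ b, ∑ a', j a' b c) / (∑ a', ∑ b', j a' b' c) := by
          rw [Finset.mul_sum, Finset.sum_div]
      _ = ∑ b, j a b c := by
          rw [hbw, mul_div_assoc, div_self hu, mul_one]
end aux2

section core
variable {A B C : Type} [Fintype A] [Fintype B] [Fintype C]

lemma core_identities (j : A → B → C → ℝ) :
    (∑ c, (∑ a, ∑ b, j a b c) * Real.log (∑ a, ∑ b, j a b c)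
       = ∑ a, ∑ b, ∑ c, j a b c * Real.log (∑ a', ∑ b', j a' b' c)) ∧
    (∑ a, ∑ c, (∑ b, j a b c) * Real.log (∑ b, j a b c)
       = ∑ a, ∑ b, ∑ c, j a b c * Real.log (∑ b', j a b' c)) ∧
    (∑ b, ∑ c, (∑ a, j a b c) * Real.log (∑ a, j a b c)
       = ∑ a, ∑ b, ∑ c, j a b c * Real.log (∑ a', j a' b c)) := by
  refine ⟨?_, ?_, ?_⟩
  · rw [sum_rot (fun a b c => j a b c * Real.log (∑ a', ∑ b', j a' b' c))]
    refine Finset.sum_congr rfl fun c _ => ?_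
    rw [Finset.sum_mul]
    exact Finset.sum_congr rfl fun a _ => Finset.sum_mul _ _ _
  · refine Finset.sum_congr rfl fun a _ => ?_
    rw [Finset.sum_comm]
    refine Finset.sum_congr rfl fun c _ => Finset.sum_mul _ _ _
  · rw [sum_rot' (fun a b c => j a b c * Real.log (∑ a', j a' b c))]
    refine Finset.sum_congr rfl fun b _ => ?_
    refine Finset.sum_congr rfl fun c _ => Finset.sum_mul _ _ _

lemma core_bounds (j : A → B → C → ℝ) (hj : ∀ a b c, 0 ≤ j a b c) (a : A) (b : B) (c : C) :
    0 ≤ j a b c ∧ j a b c ≤ (∑ b', j a b' c) ∧ j a b c ≤ (∑ a', j a' b c) ∧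
      j a b c ≤ (∑ a', ∑ b', j a' b' c) ∧ 0 ≤ (∑ b', j a b' c) ∧ 0 ≤ (∑ a', j a' b c) ∧
      0 ≤ (∑ a', ∑ b', j a' b' c) := by
  have hv : j a b c ≤ ∑ b', j a b' c :=
    Finset.single_le_sum (f := fun b' => j a b' c) (fun i _ => hj a i c) (Finset.mem_univ b)
  have hw : j a b c ≤ ∑ a', j a' b c :=
    Finset.single_le_sum (f := fun a' => j a' b c) (fun i _ => hj i b c) (Finset.mem_univ a)
  have hu : j a b c ≤ ∑ a', ∑ b', j a' b' c :=
    le_trans hv (Finset.single_le_sum (f := fun a' => ∑ b', j a' b' c)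
      (fun i _ => Finset.sum_nonneg fun b' _ => hj i b' c) (Finset.mem_univ a))
  exact ⟨hj a b c, hv, hw, hu, Finset.sum_nonneg fun i _ => hj a i c,
    Finset.sum_nonneg fun i _ => hj i b c,
    Finset.sum_nonneg fun i _ => Finset.sum_nonneg fun i' _ => hj i i' c⟩

lemma core_ineq (j : A → B → C → ℝ) (hj : ∀ a b c, 0 ≤ j a b c) :
    (-∑ a, ∑ b, ∑ c, j a b c * Real.log (j a b c)) +
    (-∑ c, (∑ a, ∑ b, j a b c) * Real.log (∑ a, ∑ b, j a b c)) ≤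
    (-∑ a, ∑ c, (∑ b, j a b c) * Real.log (∑ b, j a b c)) +
    (-∑ b, ∑ c, (∑ a, j a b c) * Real.log (∑ a, j a b c)) := by
  obtain ⟨hU, hV, hW⟩ := core_identities j
  have hpt : ∀ a b c,
      j a b c * Real.log (∑ b', j a b' c) + j a b c * Real.log (∑ a', j a' b c)
        - j a b c * Real.log (∑ a', ∑ b', j a' b' c) - j a b c * Real.log (j a b c)
      ≤ (∑ b', j a b' c) * (∑ a', j a' b c) / (∑ a', ∑ b', j a' b' c) - j a b c := by
    intro a b c
    obtain ⟨h1, h2, h3, h4, h5, h6, h7⟩ := core_bounds j hj a b c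
    exact pointwise_le h1 h2 h3 h4 h5 h6 h7
  have hsum : ∑ a, ∑ b, ∑ c,
      (j a b c * Real.log (∑ b', j a b' c) + j a b c * Real.log (∑ a', j a' b c)
        - j a b c * Real.log (∑ a', ∑ b', j a' b' c) - j a b c * Real.log (j a b c))
      ≤ ∑ a, ∑ b, ∑ c,
      ((∑ b', j a b' c) * (∑ a', j a' b c) / (∑ a', ∑ b', j a' b' c) - j a b c) :=
    Finset.sum_le_sum fun a _ => Finset.sum_le_sum fun b _ =>
      Finset.sum_le_sum fun c _ => hpt a b c
  have hSI0 : ∑ a, ∑ b, ∑ c,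
      ((∑ b', j a b' c) * (∑ a', j a' b c) / (∑ a', ∑ b', j a' b' c) - j a b c) = 0 := by
    simp only [Finset.sum_sub_distrib]
    rw [SI j hj]
    ring
  have hexp : ∑ a, ∑ b, ∑ c,
      (j a b c * Real.log (∑ b', j a b' c) + j a b c * Real.log (∑ a', j a' b c)
        - j a b c * Real.log (∑ a', ∑ b', j a' b' c) - j a b c * Real.log (j a b c))
      = (∑ a, ∑ b, ∑ c, j a b c * Real.log (∑ b', j a b' c))
        + (∑ a, ∑ b, ∑ c, j a b c * Real.log (∑ a', j a' b c))
        - (∑ a, ∑ b, ∑ c, j a b c * Real.log (∑ a', ∑ b', j a' b' c))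
        - (∑ a, ∑ b, ∑ c, j a b c * Real.log (j a b c)) := by
    simp only [Finset.sum_add_distrib, Finset.sum_sub_distrib]
  rw [hexp, hSI0] at hsum
  linarith [hsum, hU, hV, hW]

lemma core_eq (j : A → B → C → ℝ) (hj : ∀ a b c, 0 ≤ j a b c)
    (hfac : ∀ a b c, j a b c * (∑ a', ∑ b', j a' b' c)
      = (∑ b', j a b' c) * (∑ a', j a' b c)) :
    (-∑ a, ∑ b, ∑ c, j a b c * Real.log (j a b c)) +
    (-∑ c, (∑ a, ∑ b, j a b c) * Real.log (∑ a, ∑ b, j a b c)) =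
    (-∑ a, ∑ c, (∑ b, j a b c) * Real.log (∑ b, j a b c)) +
    (-∑ b, ∑ c, (∑ a, j a b c) * Real.log (∑ a, j a b c)) := by
  obtain ⟨hU, hV, hW⟩ := core_identities j
  have hpt : ∀ a b c,
      j a b c * Real.log (∑ b', j a b' c) + j a b c * Real.log (∑ a', j a' b c)
        - j a b c * Real.log (∑ a', ∑ b', j a' b' c) - j a b c * Real.log (j a b c) = 0 := by
    intro a b c
    obtain ⟨h1, h2, h3, h4, _, _, _⟩ := core_bounds j hj a b c
    exact pointwise_eq h1 h2 h3 h4 (hfac a b c)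
  have hsum : ∑ a, ∑ b, ∑ c,
      (j a b c * Real.log (∑ b', j a b' c) + j a b c * Real.log (∑ a', j a' b c)
        - j a b c * Real.log (∑ a', ∑ b', j a' b' c) - j a b c * Real.log (j a b c)) = 0 :=
    Finset.sum_eq_zero fun a _ => Finset.sum_eq_zero fun b _ =>
      Finset.sum_eq_zero fun c _ => hpt a b c
  have hexp : ∑ a, ∑ b, ∑ c,
      (j a b c * Real.log (∑ b', j a b' c) + j a b c * Real.log (∑ a', j a' b c)
        - j a b c * Real.log (∑ a', ∑ b', j a' b' c) - j a b c * Real.log (j a b c))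
      = (∑ a, ∑ b, ∑ c, j a b c * Real.log (∑ b', j a b' c))
        + (∑ a, ∑ b, ∑ c, j a b c * Real.log (∑ a', j a' b c))
        - (∑ a, ∑ b, ∑ c, j a b c * Real.log (∑ a', ∑ b', j a' b' c))
        - (∑ a, ∑ b, ∑ c, j a b c * Real.log (j a b c)) := by
    simp only [Finset.sum_add_distrib, Finset.sum_sub_distrib]
  rw [hexp] at hsum
  linarith [hsum, hU, hV, hW]
end core

section transfer
variable {Ω : Type} [Fintype Ω] {A B C : Type} [Fintype A] [Fintype B] [Fintype C]

lemma pr_marg_mid (p : Ω → ℝ) (X : Ω → A) (Y : Ω → B) (Z : Ω → C) (a : A) (c : C) :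
    pr p (fun ω => X ω = a ∧ Z ω = c)
      = ∑ b, pr p fun ω => X ω = a ∧ Y ω = b ∧ Z ω = c := by
  rw [pr_split p _ Y]
  exact Finset.sum_congr rfl fun b _ => pr_congr p fun ω => by tauto

lemma pr_marg_fst (p : Ω → ℝ) (X : Ω → A) (Y : Ω → B) (Z : Ω → C) (b : B) (c : C) :
    pr p (fun ω => Y ω = b ∧ Z ω = c)
      = ∑ a, pr p fun ω => X ω = a ∧ Y ω = b ∧ Z ω = c := by
  rw [pr_split p _ X]
  exact Finset.sum_congr rfl fun a _ => pr_congr p fun ω => by tauto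

lemma pr_marg_last (p : Ω → ℝ) (X : Ω → A) (Y : Ω → B) (Z : Ω → C) (c : C) :
    pr p (fun ω => Z ω = c)
      = ∑ a, ∑ b, pr p fun ω => X ω = a ∧ Y ω = b ∧ Z ω = c := by
  rw [pr_split p _ X]
  refine Finset.sum_congr rfl fun a _ => ?_
  rw [pr_split p _ Y]
  exact Finset.sum_congr rfl fun b _ => pr_congr p fun ω => by tauto

lemma ent_eq_sum2 (p : Ω → ℝ) (X : Ω → A) (Y : Ω → B) :
    ent p (fun ω => (X ω, Y ω)) =
      -∑ a, ∑ b, pr p (fun ω => X ω = a ∧ Y ω = b)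
        * Real.log (pr p fun ω => X ω = a ∧ Y ω = b) := by
  unfold ent
  rw [Fintype.sum_prod_type]
  congr 1
  refine Finset.sum_congr rfl fun a _ => Finset.sum_congr rfl fun b _ => ?_
  rw [pr_congr p (show ∀ ω, ((X ω, Y ω) = (a, b)) ↔ (X ω = a ∧ Y ω = b) from
    fun ω => by simp [Prod.ext_iff])]

lemma ent_eq_sum3 (p : Ω → ℝ) (X : Ω → A) (Y : Ω → B) (Z : Ω → C) :
    ent p (fun ω => (X ω, Y ω, Z ω)) =
      -∑ a, ∑ b, ∑ c, pr p (fun ω => X ω = a ∧ Y ω = b ∧ Z ω = c)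
        * Real.log (pr p fun ω => X ω = a ∧ Y ω = b ∧ Z ω = c) := by
  unfold ent
  simp only [Fintype.sum_prod_type]
  congr 1
  refine Finset.sum_congr rfl fun a _ => Finset.sum_congr rfl fun b _ =>
    Finset.sum_congr rfl fun c _ => ?_
  rw [pr_congr p (show ∀ ω, ((X ω, Y ω, Z ω) = (a, b, c)) ↔ (X ω = a ∧ Y ω = b ∧ Z ω = c) from
    fun ω => by simp [Prod.ext_iff])]

lemma ent_submodular (p : Ω → ℝ) (hp : ∀ ω, 0 ≤ p ω) (X : Ω → A) (Y : Ω → B) (Z : Ω → C) :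
    ent p (fun ω => (X ω, Y ω, Z ω)) + ent p Z ≤
      ent p (fun ω => (X ω, Z ω)) + ent p (fun ω => (Y ω, Z ω)) := by
  rw [ent_eq_sum3 p X Y Z, ent_eq_sum2 p X Z, ent_eq_sum2 p Y Z]
  unfold ent
  simp only [pr_marg_mid p X Y Z, pr_marg_fst p X Y Z, pr_marg_last p X Y Z]
  exact core_ineq (fun a b c => pr p fun ω => X ω = a ∧ Y ω = b ∧ Z ω = c)
    (fun a b c => pr_nonneg p hp _)

lemma ent_condindep (p : Ω → ℝ) (hp : ∀ ω, 0 ≤ p ω) (X : Ω → A) (Y : Ω → B) (Z : Ω → C)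
    (h : ∀ (a : A) (b : B) (c : C),
      pr p (fun ω => X ω = a ∧ Y ω = b ∧ Z ω = c) * pr p (fun ω => Y ω = b) =
      pr p (fun ω => X ω = a ∧ Y ω = b) * pr p (fun ω => Y ω = b ∧ Z ω = c)) :
    ent p (fun ω => (X ω, Z ω, Y ω)) + ent p Y =
      ent p (fun ω => (X ω, Y ω)) + ent p (fun ω => (Z ω, Y ω)) := by
  rw [ent_eq_sum3 p X Z Y, ent_eq_sum2 p X Y, ent_eq_sum2 p Z Y]
  unfold ent
  simp only [pr_marg_mid p X Z Y, pr_marg_fst p X Z Y, pr_marg_last p X Z Y]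
  refine core_eq (fun a c b => pr p fun ω => X ω = a ∧ Z ω = c ∧ Y ω = b)
    (fun a c b => pr_nonneg p hp _) ?_
  intro a c b
  beta_reduce
  rw [← pr_marg_last p X Z Y b, ← pr_marg_mid p X Z Y a b, ← pr_marg_fst p X Z Y c b]
  rw [pr_congr p (show ∀ ω, (X ω = a ∧ Z ω = c ∧ Y ω = b) ↔ (X ω = a ∧ Y ω = b ∧ Z ω = c)
        from fun ω => by tauto),
      pr_congr p (show ∀ ω, (Z ω = c ∧ Y ω = b) ↔ (Y ω = b ∧ Z ω = c) from fun ω => by tauto)]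
  exact h a b c

lemma ent_const_unit (p : Ω → ℝ) (hp1 : ∑ ω, p ω = 1) :
    ent p (fun _ : Ω => ()) = 0 := by
  unfold ent pr
  simp [hp1]

lemma ent_subadd (p : Ω → ℝ) (hp : ∀ ω, 0 ≤ p ω) (hp1 : ∑ ω, p ω = 1)
    (X : Ω → A) (Y : Ω → B) :
    ent p (fun ω => (X ω, Y ω)) ≤ ent p X + ent p Y := by
  have h : ent p (fun ω => (X ω, Y ω, ())) + ent p (fun _ : Ω => ()) ≤
      ent p (fun ω => (X ω, ())) + ent p (fun ω => (Y ω, ())) :=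
    ent_submodular p hp X Y (fun _ => ())
  have e0 : ent p (fun _ : Ω => ()) = 0 := ent_const_unit p hp1
  have e1 : ent p (fun ω => (X ω, Y ω, ())) = ent p (fun ω => (X ω, Y ω)) :=
    ent_comp p (fun ω => (X ω, Y ω)) (fun x => (x.1, x.2, ()))
      (fun x y h => by simpa [Prod.ext_iff] using h)
  have e2 : ent p (fun ω => (X ω, ())) = ent p X :=
    ent_comp p X (fun a => (a, ())) (fun x y h => by simpa [Prod.ext_iff] using h)
  have e3 : ent p (fun ω => (Y ω, ())) = ent p Y :=
    ent_comp p Y (fun a => (a, ())) (fun x y h => by simpa [Prod.ext_iff] using h)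
  rw [e0, e1, e2, e3] at h
  linarith
end transfer

section final
variable {Ω 𝒳₁ 𝒳₂ 𝒳₃ 𝒴R 𝒴S : Type}
    [Fintype Ω] [Fintype 𝒳₁] [Fintype 𝒳₂] [Fintype 𝒳₃] [Fintype 𝒴R] [Fintype 𝒴S]

theorem stmt7' (p : Ω → ℝ) (hp : ∀ ω, 0 ≤ p ω) (hp1 : ∑ ω, p ω = 1)
    (X₁ : Ω → 𝒳₁) (X₂ : Ω → 𝒳₂) (X₃ : Ω → 𝒳₃) (YR : Ω → 𝒴R) (YS : Ω → 𝒴S)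
    (h₁ : ∀ a b c, (pr p fun ω => YR ω = a ∧ X₃ ω = b ∧ (X₁ ω, X₂ ω, YS ω) = c)
        * (pr p fun ω => X₃ ω = b) =
        (pr p fun ω => YR ω = a ∧ X₃ ω = b) * pr p fun ω => X₃ ω = b ∧ (X₁ ω, X₂ ω, YS ω) = c)
    (h₂ : ∀ a b c, (pr p fun ω => YS ω = a ∧ (X₁ ω, X₂ ω) = b ∧ (X₃ ω, YR ω) = c)
        * (pr p fun ω => (X₁ ω, X₂ ω) = b) =
        (pr p fun ω => YS ω = a ∧ (X₁ ω, X₂ ω) = b)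
          * pr p fun ω => (X₁ ω, X₂ ω) = b ∧ (X₃ ω, YR ω) = c) :
    (ent p fun ω => (X₁ ω, X₂ ω, X₃ ω)) + (ent p fun ω => (YR ω, YS ω))
        - (ent p fun ω => ((X₁ ω, X₂ ω, X₃ ω), YR ω, YS ω)) ≤
      (ent p X₃ + ent p YR - (ent p fun ω => (X₃ ω, YR ω)))
        + ((ent p fun ω => (X₁ ω, X₂ ω)) + ent p YS
            - ent p fun ω => ((X₁ ω, X₂ ω), YS ω)) := by
  have hF1 : (ent p fun ω => (YR ω, YS ω)) ≤ ent p YR + ent p YS :=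
    ent_subadd p hp hp1 YR YS
  have hF2 : (ent p fun ω => (YR ω, (X₁ ω, X₂ ω, YS ω), X₃ ω)) + ent p X₃
      = (ent p fun ω => (YR ω, X₃ ω)) + ent p fun ω => ((X₁ ω, X₂ ω, YS ω), X₃ ω) :=
    ent_condindep p hp YR X₃ (fun ω => (X₁ ω, X₂ ω, YS ω)) h₁
  have hF3 : (ent p fun ω => (YS ω, (X₃ ω, YR ω), (X₁ ω, X₂ ω)))
        + (ent p fun ω => (X₁ ω, X₂ ω))
      = (ent p fun ω => (YS ω, (X₁ ω, X₂ ω)))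
        + ent p fun ω => ((X₃ ω, YR ω), (X₁ ω, X₂ ω)) :=
    ent_condindep p hp YS (fun ω => (X₁ ω, X₂ ω)) (fun ω => (X₃ ω, YR ω)) h₂
  have hF4 : (ent p fun ω => (YS ω, YR ω, (X₁ ω, X₂ ω, X₃ ω)))
        + (ent p fun ω => (X₁ ω, X₂ ω, X₃ ω))
      ≤ (ent p fun ω => (YS ω, (X₁ ω, X₂ ω, X₃ ω)))
        + ent p fun ω => (YR ω, (X₁ ω, X₂ ω, X₃ ω)) :=
    ent_submodular p hp YS YR (fun ω => (X₁ ω, X₂ ω, X₃ ω))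
  have inj5 : ∀ {D : Type} (f : 𝒴S × 𝒴R × 𝒳₁ × 𝒳₂ × 𝒳₃ → D), True := fun _ => trivial
  -- relabelings
  have R1 : (ent p fun ω => ((X₁ ω, X₂ ω, X₃ ω), YR ω, YS ω))
      = ent p fun ω => (YS ω, YR ω, X₁ ω, X₂ ω, X₃ ω) :=
    ent_comp p (fun ω => (YS ω, YR ω, X₁ ω, X₂ ω, X₃ ω))
      (fun x => ((x.2.2.1, x.2.2.2.1, x.2.2.2.2), x.2.1, x.1))
      (by rintro ⟨s, r, a, b, c⟩ ⟨s', r', a', b', c'⟩ hxy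
          simp only [Prod.mk.injEq] at hxy ⊢; tauto)
  have R2 : (ent p fun ω => (YR ω, (X₁ ω, X₂ ω, YS ω), X₃ ω))
      = ent p fun ω => (YS ω, YR ω, X₁ ω, X₂ ω, X₃ ω) :=
    ent_comp p (fun ω => (YS ω, YR ω, X₁ ω, X₂ ω, X₃ ω))
      (fun x => (x.2.1, (x.2.2.1, x.2.2.2.1, x.1), x.2.2.2.2))
      (by rintro ⟨s, r, a, b, c⟩ ⟨s', r', a', b', c'⟩ hxy
          simp only [Prod.mk.injEq] at hxy ⊢; tauto)
  have R3 : (ent p fun ω => ((X₁ ω, X₂ ω, YS ω), X₃ ω))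
      = ent p fun ω => (YS ω, X₁ ω, X₂ ω, X₃ ω) :=
    ent_comp p (fun ω => (YS ω, X₁ ω, X₂ ω, X₃ ω))
      (fun x => ((x.2.1, x.2.2.1, x.1), x.2.2.2))
      (by rintro ⟨s, a, b, c⟩ ⟨s', a', b', c'⟩ hxy
          simp only [Prod.mk.injEq] at hxy ⊢; tauto)
  have R4 : (ent p fun ω => (YS ω, (X₃ ω, YR ω), (X₁ ω, X₂ ω)))
      = ent p fun ω => (YS ω, YR ω, X₁ ω, X₂ ω, X₃ ω) :=
    ent_comp p (fun ω => (YS ω, YR ω, X₁ ω, X₂ ω, X₃ ω))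
      (fun x => (x.1, (x.2.2.2.2, x.2.1), x.2.2.1, x.2.2.2.1))
      (by rintro ⟨s, r, a, b, c⟩ ⟨s', r', a', b', c'⟩ hxy
          simp only [Prod.mk.injEq] at hxy ⊢; tauto)
  have R5 : (ent p fun ω => (YS ω, (X₁ ω, X₂ ω)))
      = ent p fun ω => ((X₁ ω, X₂ ω), YS ω) :=
    ent_comp p (fun ω => ((X₁ ω, X₂ ω), YS ω)) (fun x => (x.2, x.1))
      (by rintro ⟨⟨a, b⟩, s⟩ ⟨⟨a', b'⟩, s'⟩ hxy
          simp only [Prod.mk.injEq] at hxy ⊢; tauto)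
  have R6 : (ent p fun ω => ((X₃ ω, YR ω), (X₁ ω, X₂ ω)))
      = ent p fun ω => (YR ω, X₁ ω, X₂ ω, X₃ ω) :=
    ent_comp p (fun ω => (YR ω, X₁ ω, X₂ ω, X₃ ω))
      (fun x => ((x.2.2.2, x.1), x.2.1, x.2.2.1))
      (by rintro ⟨r, a, b, c⟩ ⟨r', a', b', c'⟩ hxy
          simp only [Prod.mk.injEq] at hxy ⊢; tauto)
  have R7 : (ent p fun ω => (YS ω, YR ω, (X₁ ω, X₂ ω, X₃ ω)))
      = ent p fun ω => (YS ω, YR ω, X₁ ω, X₂ ω, X₃ ω) :=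
    ent_comp p (fun ω => (YS ω, YR ω, X₁ ω, X₂ ω, X₃ ω))
      (fun x => (x.1, x.2.1, (x.2.2.1, x.2.2.2.1, x.2.2.2.2)))
      (by rintro ⟨s, r, a, b, c⟩ ⟨s', r', a', b', c'⟩ hxy
          simp only [Prod.mk.injEq] at hxy ⊢; tauto)
  have R8 : (ent p fun ω => (YS ω, (X₁ ω, X₂ ω, X₃ ω)))
      = ent p fun ω => (YS ω, X₁ ω, X₂ ω, X₃ ω) :=
    ent_comp p (fun ω => (YS ω, X₁ ω, X₂ ω, X₃ ω))
      (fun x => (x.1, (x.2.1, x.2.2.1, x.2.2.2)))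
      (by rintro ⟨s, a, b, c⟩ ⟨s', a', b', c'⟩ hxy
          simp only [Prod.mk.injEq] at hxy ⊢; tauto)
  have R9 : (ent p fun ω => (YR ω, (X₁ ω, X₂ ω, X₃ ω)))
      = ent p fun ω => (YR ω, X₁ ω, X₂ ω, X₃ ω) :=
    ent_comp p (fun ω => (YR ω, X₁ ω, X₂ ω, X₃ ω))
      (fun x => (x.1, (x.2.1, x.2.2.1, x.2.2.2)))
      (by rintro ⟨r, a, b, c⟩ ⟨r', a', b', c'⟩ hxy
          simp only [Prod.mk.injEq] at hxy ⊢; tauto)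
  have R10 : (ent p fun ω => (YR ω, X₃ ω)) = ent p fun ω => (X₃ ω, YR ω) :=
    ent_comp p (fun ω => (X₃ ω, YR ω)) (fun x => (x.2, x.1))
      (by rintro ⟨c, r⟩ ⟨c', r'⟩ hxy
          simp only [Prod.mk.injEq] at hxy ⊢; tauto)
  rw [R2, R10, R3] at hF2
  rw [R4, R5, R6] at hF3
  rw [R7, R8, R9] at hF4
  rw [R1]
  linarith
end final

theorem stmt7 {Ω 𝒳₁ 𝒳₂ 𝒳₃ 𝒴R 𝒴S : Type}
    [Fintype Ω] [Fintype 𝒳₁] [Fintype 𝒳₂] [Fintype 𝒳₃] [Fintype 𝒴R] [Fintype 𝒴S]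
    (p : Ω → ℝ) (hp : ∀ ω, 0 ≤ p ω) (hp1 : ∑ ω, p ω = 1)
    (X₁ : Ω → 𝒳₁) (X₂ : Ω → 𝒳₂) (X₃ : Ω → 𝒳₃) (YR : Ω → 𝒴R) (YS : Ω → 𝒴S)
    (h₁ : CondIndep p YR X₃ (fun ω => (X₁ ω, X₂ ω, YS ω)))
    (h₂ : CondIndep p YS (fun ω => (X₁ ω, X₂ ω)) (fun ω => (X₃ ω, YR ω))) :
    mi p (fun ω => (X₁ ω, X₂ ω, X₃ ω)) (fun ω => (YR ω, YS ω)) ≤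
      mi p X₃ YR + mi p (fun ω => (X₁ ω, X₂ ω)) YS := by
  simp only [mi]
  exact stmt7' p hp hp1 X₁ X₂ X₃ YR YS (fun a b c => h₁ a b c) (fun a b c => h₂ a b c)
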